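/- For every integer n ≥ 1, every natural number m, and every real x ∈ [0, 2], one has f_n(x + 2m) = −u_m · f_n(x). -/

import Mathlib

/-- The ±1 Thue–Morse sequence: `u n = (-1)^(s₂(n)+1)` where `s₂` is the binary digit sum. -/
def u (n : ℕ) : ℤ := (-1) ^ ((Nat.digits 2 n).sum + 1)

/-- The "Pascal triangle" associated to the Thue–Morse sequence:
`Sig k n` is `Σ^k_n` (k the superscript, n the subscript). -/
def Sig : ℕ → ℕ → ℤ
  | k, 0 => u k
  | 0, _ + 1 => 0
  | k + 1, n + 1 => Sig k n + Sig k (n + 1)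

/-- The renormalized points `x^k_n = 2^{-(n-1)(n-2)/2} Σ^k_n`. -/
noncomputable def xkn (n k : ℕ) : ℝ := (Sig k n : ℝ) / 2 ^ ((n - 1) * (n - 2) / 2)

/-- The piecewise linear interpolation `f n` of the points `x^k_n` at `k/2^{n-1}`,
vanishing on the nonpositive reals. -/
noncomputable def f (n : ℕ) (x : ℝ) : ℝ :=
  if x ≤ 0 then 0
  else
    xkn n ⌊(2 : ℝ) ^ (n - 1) * x⌋₊ +
      (2 : ℝ) ^ (n - 1) * (x - (⌊(2 : ℝ) ^ (n - 1) * x⌋₊ : ℝ) / 2 ^ (n - 1)) *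
        (xkn n (⌊(2 : ℝ) ^ (n - 1) * x⌋₊ + 1) - xkn n ⌊(2 : ℝ) ^ (n - 1) * x⌋₊)

lemma u_zero : u 0 = -1 := by simp [u]

lemma u_even (i : ℕ) : u (2 * i) = u i := by
  rcases Nat.eq_zero_or_pos i with h | h
  · simp [h]
  · unfold u
    rw [Nat.digits_def' (by norm_num : 1 < 2) (by positivity)]
    simp [Nat.mul_div_cancel_left, Nat.mul_mod_right]

lemma u_odd (i : ℕ) : u (2 * i + 1) = -u i := by
  unfold u
  rw [Nat.digits_def' (by norm_num : 1 < 2) (by omega)]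
  have h1 : (2 * i + 1) % 2 = 1 := by omega
  have h2 : (2 * i + 1) / 2 = i := by omega
  rw [h1, h2]
  simp [pow_succ, pow_add]

lemma u_one : u 1 = 1 := by
  have := u_odd 0
  simpa [u_zero] using this

lemma sum_u_even (m : ℕ) : ∑ j ∈ Finset.range (2 * m), u j = 0 := by
  induction m with
  | zero => simp
  | succ m ih =>
    have : 2 * (m + 1) = 2 * m + 1 + 1 := by ring
    rw [this, Finset.sum_range_succ, Finset.sum_range_succ, ih, u_odd, u_even]
    ring

lemma Sig_zero_sup (n : ℕ) (hn : 1 ≤ n) : Sig 0 n = 0 := by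
  obtain ⟨N, rfl⟩ : ∃ N, n = N + 1 := ⟨n - 1, by omega⟩
  rfl

lemma Sig_succ_succ (k n : ℕ) : Sig (k + 1) (n + 1) = Sig k n + Sig k (n + 1) := rfl

lemma Sig_sum (k n : ℕ) : Sig k (n + 1) = ∑ j ∈ Finset.range k, Sig j n := by
  induction k with
  | zero => rfl
  | succ k ih => rw [Sig_succ_succ, ih, Finset.sum_range_succ]; ring

lemma Sig_base (k : ℕ) : Sig k 0 = u k := by cases k <;> rfl

lemma Sig_main : ∀ n, 1 ≤ n → ∀ m k, k ≤ 2 ^ n → Sig (k + m * 2 ^ n) n = -u m * Sig k n := by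
  intro n
  induction n with
  | zero => omega
  | succ N ih =>
    intro _ m k hk
    rcases Nat.eq_zero_or_pos N with rfl | hN
    · -- base case n = 1
      have h2 : (2:ℕ) ^ 1 = 2 := by norm_num
      rw [h2] at hk ⊢
      interval_cases k
      · have e : 0 + m * 2 = 2 * m := by ring
        rw [e, Sig_sum]
        simp only [Sig_base]
        rw [sum_u_even]
        simp [Sig]
      · have e : 1 + m * 2 = 2 * m + 1 := by ring
        rw [e, Sig_sum, Finset.sum_range_succ]
        simp only [Sig_base]
        rw [sum_u_even, u_even]
        have h11 : Sig 1 (0 + 1) = u 0 + Sig 0 (0 + 1) := rfl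
        rw [h11, u_zero]
        show (0 : ℤ) + u m = -u m * (-1 + 0)
        ring
      · have e : 2 + m * 2 = 2 * (m + 1) := by ring
        rw [e, Sig_sum]
        simp only [Sig_base]
        rw [sum_u_even]
        have h21 : Sig 2 (0 + 1) = u 1 + (u 0 + Sig 0 (0 + 1)) := rfl
        rw [h21, u_zero, u_one]
        show (0 : ℤ) = -u m * (1 + (-1 + 0))
        ring
    · -- inductive step
      have L' : ∀ m k, k ≤ 2 ^ (N + 1) → Sig (k + m * 2 ^ (N + 1)) N = -u m * Sig k N := by
        intro m k hk
        by_cases h : k ≤ 2 ^ N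
        · have e : k + m * 2 ^ (N + 1) = k + (2 * m) * 2 ^ N := by ring
          rw [e, ih hN (2 * m) k h, u_even]
        · set j := k - 2 ^ N with hj_def
          have hj : j ≤ 2 ^ N := by
            have : 2 ^ (N + 1) = 2 ^ N + 2 ^ N := by ring
            omega
          have hkj : k = j + 2 ^ N := by omega
          have e1 : k + m * 2 ^ (N + 1) = j + (2 * m + 1) * 2 ^ N := by rw [hkj]; ring
          rw [e1, ih hN (2 * m + 1) j hj, u_odd]
          have e2 : Sig k N = -u 1 * Sig j N := by
            rw [hkj]
            have := ih hN 1 j hj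
            rwa [one_mul] at this
          rw [e2, u_one]; ring
      have Zone : Sig (2 ^ (N + 1)) (N + 1) = 0 := by
        rw [Sig_sum]
        have e : (2:ℕ) ^ (N + 1) = 2 ^ N + 2 ^ N := by ring
        rw [e, Finset.sum_range_add]
        have : ∀ i ∈ Finset.range (2 ^ N), Sig (2 ^ N + i) N = -Sig i N := by
          intro i hi
          have hi' : i ≤ 2 ^ N := le_of_lt (Finset.mem_range.mp hi)
          have e2 : 2 ^ N + i = i + 1 * 2 ^ N := by ring
          rw [e2, ih hN 1 i hi', u_one]; ring
        rw [Finset.sum_congr rfl this, Finset.sum_neg_distrib]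
        ring
      have Zm : ∀ m, Sig (m * 2 ^ (N + 1)) (N + 1) = 0 := by
        intro m
        induction m with
        | zero => simp [Sig_zero_sup]
        | succ m ihm =>
          have e : (m + 1) * 2 ^ (N + 1) = m * 2 ^ (N + 1) + 2 ^ (N + 1) := by ring
          rw [e, Sig_sum, Finset.sum_range_add]
          rw [← Sig_sum, ihm]
          have : ∀ i ∈ Finset.range (2 ^ (N + 1)), Sig (m * 2 ^ (N + 1) + i) N = -u m * Sig i N := by
            intro i hi
            have hi' : i ≤ 2 ^ (N + 1) := le_of_lt (Finset.mem_range.mp hi)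
            rw [add_comm, L' m i hi']
          rw [Finset.sum_congr rfl this, ← Finset.mul_sum, ← Sig_sum, Zone]
          ring
      revert hk
      induction k with
      | zero =>
        intro _
        rw [zero_add, Zm m, Sig_zero_sup (N + 1) (by omega)]
        ring
      | succ k ihk =>
        intro hk1
        have hk : k ≤ 2 ^ (N + 1) := by omega
        have e : k + 1 + m * 2 ^ (N + 1) = (k + m * 2 ^ (N + 1)) + 1 := by ring
        rw [e, Sig_succ_succ, L' m k hk, ihk hk, Sig_succ_succ]
        ring

lemma xkn_main (n : ℕ) (hn : 1 ≤ n) (m k : ℕ) (hk : k ≤ 2 ^ n) :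
    xkn n (k + m * 2 ^ n) = -(u m : ℝ) * xkn n k := by
  unfold xkn
  rw [Sig_main n hn m k hk]
  push_cast
  ring

lemma xkn_zero (n : ℕ) (hn : 1 ≤ n) : xkn n 0 = 0 := by
  unfold xkn
  rw [Sig_zero_sup n hn]
  simp

theorem f_translation (n : ℕ) (hn : 1 ≤ n) (m : ℕ) (x : ℝ) (hx : x ∈ Set.Icc (0 : ℝ) 2) :
    f n (x + 2 * m) = -(u m : ℝ) * f n x := by
  obtain ⟨N, rfl⟩ : ∃ N, n = N + 1 := ⟨n - 1, by omega⟩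
  obtain ⟨hx0, hx2⟩ := hx
  rcases Nat.eq_zero_or_pos m with rfl | hm
  · simp [u_zero]
  have hp : (0 : ℝ) < 2 ^ N := by positivity
  have hmpos : (0 : ℝ) < (m : ℝ) := by exact_mod_cast hm
  have hxm : 0 < x + 2 * m := by linarith
  have hmul : (2 : ℝ) ^ N * (x + 2 * m) = 2 ^ N * x + ((m * 2 ^ (N + 1) : ℕ) : ℝ) := by
    push_cast
    ring
  have hfloor : ⌊(2 : ℝ) ^ (N + 1 - 1) * (x + 2 * m)⌋₊ =
      ⌊(2 : ℝ) ^ N * x⌋₊ + m * 2 ^ (N + 1) := by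
    rw [Nat.add_sub_cancel, hmul, Nat.floor_add_natCast (by positivity)]
  rcases eq_or_lt_of_le hx0 with rfl | hxpos
  · -- x = 0
    rw [f, if_neg (by linarith), f, if_pos le_rfl]
    simp only [Nat.add_sub_cancel] at hfloor ⊢
    rw [hfloor]
    have h0 : ⌊(2 : ℝ) ^ N * (0 : ℝ)⌋₊ = 0 := by simp
    rw [h0]
    have e1 : xkn (N + 1) (0 + m * 2 ^ (N + 1)) = -(u m : ℝ) * xkn (N + 1) 0 :=
      xkn_main (N + 1) (by omega) m 0 (by positivity)
    rw [e1, xkn_zero (N + 1) (by omega)]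
    have hδ : (0 : ℝ) + 2 * m - ((0 + m * 2 ^ (N + 1) : ℕ) : ℝ) / 2 ^ N = 0 := by
      push_cast
      field_simp
      ring
    rw [hδ]
    ring
  · -- x > 0
    rw [f, if_neg (by linarith), f, if_neg (by linarith)]
    simp only [Nat.add_sub_cancel] at hfloor ⊢
    rw [hfloor]
    set k₀ := ⌊(2 : ℝ) ^ N * x⌋₊ with hk₀def
    have hk₀le : k₀ ≤ 2 ^ (N + 1) := by
      have h1 : (2 : ℝ) ^ N * x ≤ ((2 ^ (N + 1) : ℕ) : ℝ) := by
        push_cast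
        have e : (2 : ℝ) ^ (N + 1) = 2 ^ N * 2 := by ring
        nlinarith
      calc k₀ ≤ ⌊((2 ^ (N + 1) : ℕ) : ℝ)⌋₊ := Nat.floor_le_floor h1
        _ = 2 ^ (N + 1) := Nat.floor_natCast _
    have hdiv : ((k₀ + m * 2 ^ (N + 1) : ℕ) : ℝ) / 2 ^ N = (k₀ : ℝ) / 2 ^ N + 2 * m := by
      push_cast
      field_simp
      ring
    rw [hdiv]
    rcases lt_or_eq_of_le hk₀le with hlt | heq
    · -- k₀ < 2^(N+1), so k₀ + 1 ≤ 2^(N+1)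
      have e2 : k₀ + m * 2 ^ (N + 1) + 1 = (k₀ + 1) + m * 2 ^ (N + 1) := by ring
      rw [e2, xkn_main (N + 1) (by omega) m k₀ hk₀le,
        xkn_main (N + 1) (by omega) m (k₀ + 1) (by omega)]
      ring
    · -- k₀ = 2^(N+1), which forces x = 2
      have hx2' : x = 2 := by
        have h1 : ((2 ^ (N + 1) : ℕ) : ℝ) ≤ 2 ^ N * x := by
          rw [← heq]
          exact Nat.floor_le (by positivity)
        have h2 : (2 : ℝ) ^ (N + 1) ≤ 2 ^ N * x := by push_cast at h1 ⊢; linarith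
        have h3 : (2 : ℝ) ^ (N + 1) = 2 ^ N * 2 := by ring
        nlinarith
      subst hx2'
      have hδ1 : (2 : ℝ) + 2 * m - ((k₀ : ℝ) / 2 ^ N + 2 * m) = 0 := by
        rw [heq]
        push_cast
        field_simp
        ring
      have hδ2 : (2 : ℝ) - (k₀ : ℝ) / 2 ^ N = 0 := by
        rw [heq]
        push_cast
        field_simp
        ring
      rw [hδ1, hδ2, xkn_main (N + 1) (by omega) m k₀ hk₀le]
      ring
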